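/- Let D ≥ 1, let Σ be a symmetric positive-definite real D×D matrix, and let μ be the measure on ℝ^D with density f_Z(z) = (2π)^{−D/2}(det Σ)^{−1/2} exp(−½ zᵀΣ⁻¹z) with respect to Lebesgue measure. Let Φ be the standard normal distribution function and φ the standard normal density, fix R > 0, and define T : ℝ^D → ℝ^D by T(z)_i = R/(1 − Φ(z_i)) for each i. Then the pushforward measure T_*μ is absolutely continuous with respect to Lebesgue measure on ℝ^D, with a density h supported on (R,∞)^D satisfying, for all z ∈ ℝ^D, h(T(z)) = f_Z(z) · ∏_{i=1}^{D} (1 − Φ(z_i))² / (R·φ(z_i)). Equivalently, h(x) = (det Σ)^{−1/2} exp{−½ g⁻¹(x/R)ᵀ(Σ⁻¹ − I_D) g⁻¹(x/R)} · R^D / ∏_{i=1}^D x_i², where g⁻¹(y)_i = Φ⁻¹(1 − 1/y_i). (Lemma 3 of the paper: conditional density of the transformed Gaussian scale mixture given R.) -/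

import Mathlib

open MeasureTheory Matrix Real

/-- The standard normal distribution function `Φ`. -/
noncomputable def stdNormalCDF (t : ℝ) : ℝ :=
  ∫ s in Set.Iic t, (Real.sqrt (2 * π))⁻¹ * Real.exp (-s ^ 2 / 2)

/-- The standard normal density `φ`. -/
noncomputable def stdNormalPDF (s : ℝ) : ℝ := (Real.sqrt (2 * π))⁻¹ * Real.exp (-s ^ 2 / 2)

lemma pdf_pos (s : ℝ) : 0 < stdNormalPDF s := by
  have h2π : (0:ℝ) < 2 * π := by positivity
  unfold stdNormalPDF
  positivity

lemma pdf_eq (s : ℝ) : stdNormalPDF s = (Real.sqrt (2 * π))⁻¹ * Real.exp (-(1/2) * s ^ 2) := by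
  unfold stdNormalPDF; ring_nf

lemma pdf_integrable : Integrable stdNormalPDF := by
  have : Integrable (fun s : ℝ => (Real.sqrt (2 * π))⁻¹ * Real.exp (-(1/2) * s ^ 2)) :=
    (integrable_exp_neg_mul_sq (by norm_num : (0:ℝ) < 1/2)).const_mul _
  exact this.congr (by filter_upwards with s using (pdf_eq s).symm)

lemma pdf_integral : ∫ s, stdNormalPDF s = 1 := by
  have h : ∫ s : ℝ, Real.exp (-(1/2) * s ^ 2) = Real.sqrt (2 * π) := by
    rw [integral_gaussian]; rw [show π/(1/2) = 2*π by ring]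
  have h2π : (0:ℝ) < 2 * π := by positivity
  calc ∫ s, stdNormalPDF s = ∫ s : ℝ, (Real.sqrt (2 * π))⁻¹ * Real.exp (-(1/2) * s ^ 2) := by
        congr 1; ext s; exact pdf_eq s
    _ = (Real.sqrt (2 * π))⁻¹ * Real.sqrt (2 * π) := by rw [integral_const_mul, h]
    _ = 1 := inv_mul_cancel₀ (by positivity)

lemma pdf_continuous : Continuous stdNormalPDF := by
  unfold stdNormalPDF; fun_prop

lemma cdf_eq (t : ℝ) : stdNormalCDF t = ∫ s in Set.Iic t, stdNormalPDF s := rfl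

lemma cdf_pos (t : ℝ) : 0 < stdNormalCDF t := by
  rw [cdf_eq]
  rw [setIntegral_pos_iff_support_of_nonneg_ae
    (by filter_upwards with s using (pdf_pos s).le) (pdf_integrable.integrableOn)]
  have : Function.support stdNormalPDF = Set.univ := by
    ext s; simp [Function.support, (pdf_pos s).ne']
  rw [this, Set.univ_inter]
  simp [Real.volume_Iic]

lemma cdf_add (a b : ℝ) (hab : a ≤ b) :
    stdNormalCDF b = stdNormalCDF a + ∫ s in Set.Ioc a b, stdNormalPDF s := by
  rw [cdf_eq, cdf_eq, ← Set.Iic_union_Ioc_eq_Iic hab,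
    setIntegral_union (Set.Iic_disjoint_Ioc le_rfl) measurableSet_Ioc
      pdf_integrable.integrableOn pdf_integrable.integrableOn]

lemma cdf_strictMono : StrictMono stdNormalCDF := by
  intro a b hab
  rw [cdf_add a b hab.le, lt_add_iff_pos_right]
  rw [setIntegral_pos_iff_support_of_nonneg_ae
    (by filter_upwards with s using (pdf_pos s).le) (pdf_integrable.integrableOn)]
  have : Function.support stdNormalPDF = Set.univ := by
    ext s; simp [Function.support, (pdf_pos s).ne']
  rw [this, Set.univ_inter, Real.volume_Ioc]
  simp [hab]

lemma cdf_lt_one (t : ℝ) : stdNormalCDF t < 1 := by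
  have h1 : (1:ℝ) = (∫ s in Set.Iic t, stdNormalPDF s) + ∫ s in Set.Ioi t, stdNormalPDF s := by
    rw [← pdf_integral, ← setIntegral_union (Set.Iic_disjoint_Ioi le_rfl) measurableSet_Ioi
      pdf_integrable.integrableOn pdf_integrable.integrableOn, Set.Iic_union_Ioi,
      setIntegral_univ]
  have h2 : 0 < ∫ s in Set.Ioi t, stdNormalPDF s := by
    rw [setIntegral_pos_iff_support_of_nonneg_ae
      (by filter_upwards with s using (pdf_pos s).le) (pdf_integrable.integrableOn)]
    have : Function.support stdNormalPDF = Set.univ := by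
      ext s; simp [Function.support, (pdf_pos s).ne']
    rw [this, Set.univ_inter]
    simp [Real.volume_Ioi]
  rw [cdf_eq]; linarith

lemma cdf_hasDerivAt (s : ℝ) : HasDerivAt stdNormalCDF (stdNormalPDF s) s := by
  set a := s - 1 with ha
  have has : a < s := by simp [ha]
  have hG : HasDerivAt (fun u => stdNormalCDF a + ∫ x in a..u, stdNormalPDF x)
      (stdNormalPDF s) s := by
    have := intervalIntegral.integral_hasDerivAt_right
      (pdf_integrable.intervalIntegrable (a := a) (b := s))
      pdf_continuous.stronglyMeasurable.stronglyMeasurableAtFilter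
      pdf_continuous.continuousAt
    exact this.const_add _
  refine hG.congr_of_eventuallyEq ?_
  filter_upwards [eventually_gt_nhds has] with u hu
  rw [cdf_add a u hu.le, intervalIntegral.integral_of_le hu.le]

lemma cdf_continuous : Continuous stdNormalCDF :=
  continuous_iff_continuousAt.2 fun s => (cdf_hasDerivAt s).continuousAt

lemma one_sub_cdf_pos (s : ℝ) : 0 < 1 - stdNormalCDF s := by linarith [cdf_lt_one s]

lemma tmap_strictMono {R : ℝ} (hR : 0 < R) :
    StrictMono (fun s => R / (1 - stdNormalCDF s)) := by
  intro a b hab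
  exact div_lt_div_of_pos_left hR (one_sub_cdf_pos b) (by linarith [cdf_strictMono hab])

lemma tmap_gt {R : ℝ} (hR : 0 < R) (s : ℝ) : R < R / (1 - stdNormalCDF s) := by
  rw [lt_div_iff₀ (one_sub_cdf_pos s)]
  nlinarith [cdf_pos s]

lemma tmap_hasDerivAt (R : ℝ) (s : ℝ) :
    HasDerivAt (fun s => R / (1 - stdNormalCDF s))
      (R * stdNormalPDF s / (1 - stdNormalCDF s) ^ 2) s := by
  have h1 : HasDerivAt (fun s => 1 - stdNormalCDF s) (-stdNormalPDF s) s :=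
    (cdf_hasDerivAt s).const_sub 1
  have h2 := (h1.inv (one_sub_cdf_pos s).ne').const_mul R
  have e1 : (fun s => R / (1 - stdNormalCDF s)) = fun y => R * (fun s => 1 - stdNormalCDF s)⁻¹ y := by
    funext x; simp [div_eq_mul_inv]
  have e2 : R * stdNormalPDF s / (1 - stdNormalCDF s) ^ 2
      = R * (- -stdNormalPDF s / (1 - stdNormalCDF s) ^ 2) := by ring
  rw [e1, e2]; exact h2

theorem stmt18
    (D : ℕ) (hD : 1 ≤ D)
    (Sig : Matrix (Fin D) (Fin D) ℝ) (hSymm : Sig.IsSymm) (hPD : Sig.PosDef)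
    (R : ℝ) (hR : 0 < R)
    (fZ : (Fin D → ℝ) → ℝ)
    (hfZ : ∀ z : Fin D → ℝ, fZ z =
      (2 * π) ^ (-(D : ℝ) / 2) * Sig.det ^ (-(1 : ℝ) / 2) *
        Real.exp (-(1 / 2) * (z ⬝ᵥ Sig⁻¹ *ᵥ z)))
    (μ : Measure (Fin D → ℝ))
    (hμ : μ = (volume : Measure (Fin D → ℝ)).withDensity
        (fun z => ENNReal.ofReal (fZ z)))
    (T : (Fin D → ℝ) → (Fin D → ℝ))
    (hT : ∀ z : Fin D → ℝ, ∀ i : Fin D, T z i = R / (1 - stdNormalCDF (z i))) :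
    ∃ h : (Fin D → ℝ) → ℝ, Measurable h ∧
      Measure.map T μ = (volume : Measure (Fin D → ℝ)).withDensity
        (fun x => ENNReal.ofReal (h x)) ∧
      (∀ x : Fin D → ℝ, (∃ i : Fin D, x i ≤ R) → h x = 0) ∧
      (∀ z : Fin D → ℝ, h (T z) =
        fZ z * ∏ i : Fin D, (1 - stdNormalCDF (z i)) ^ 2 / (R * stdNormalPDF (z i))) := by
  classical
  have hTt : T = fun z i => R / (1 - stdNormalCDF (z i)) :=
    funext fun z => funext fun i => hT z i
  subst hTt
  subst hμ
  -- the diagonal entries of the Jacobian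
  set d : ℝ → ℝ := fun s => R * stdNormalPDF s / (1 - stdNormalCDF s) ^ 2 with hd
  have hd_pos : ∀ s, 0 < d s := fun s => by
    have h1 := pdf_pos s; have h2 := one_sub_cdf_pos s
    rw [hd]; positivity
  set T : (Fin D → ℝ) → (Fin D → ℝ) := fun z i => R / (1 - stdNormalCDF (z i)) with hTdef
  have hTcont : Continuous T := by
    refine continuous_pi fun i => ?_
    exact (continuous_const.div (continuous_const.sub
      (cdf_continuous.comp (continuous_apply i)))
      (fun z => (one_sub_cdf_pos (z i)).ne'))
  have hTmeas : Measurable T := hTcont.measurable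
  have hTinj : Function.Injective T := fun z w hzw => funext fun i =>
    (tmap_strictMono hR).injective (congrFun hzw i)
  have hTemb : MeasurableEmbedding T := hTcont.measurableEmbedding hTinj
  -- the derivative
  set L : (Fin D → ℝ) → ((Fin D → ℝ) →L[ℝ] (Fin D → ℝ)) :=
    fun z => ContinuousLinearMap.pi
      (fun i => d (z i) • ContinuousLinearMap.proj (R := ℝ) (φ := fun _ : Fin D => ℝ) i)
    with hLdef
  have hL : ∀ z, HasFDerivAt T (L z) z := by
    intro z
    rw [hasFDerivAt_pi']
    intro i
    rw [hLdef, ContinuousLinearMap.proj_pi]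
    have := (tmap_hasDerivAt R (z i)).comp_hasFDerivAt z
      (ContinuousLinearMap.proj (R := ℝ) (φ := fun _ : Fin D => ℝ) i).hasFDerivAt
    exact this
  have hdet : ∀ z, (L z).det = ∏ i, d (z i) := by
    intro z
    have h : LinearMap.toMatrix (Pi.basisFun ℝ (Fin D)) (Pi.basisFun ℝ (Fin D))
        ((L z) : (Fin D → ℝ) →ₗ[ℝ] (Fin D → ℝ))
        = Matrix.diagonal (fun i => d (z i)) := by
      ext i j
      simp [hLdef, LinearMap.toMatrix_apply, Matrix.diagonal, Pi.single_apply, eq_comm]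
    rw [ContinuousLinearMap.det, ← LinearMap.det_toMatrix (Pi.basisFun ℝ (Fin D)), h,
      Matrix.det_diagonal]
  -- the density
  set F : (Fin D → ℝ) → ℝ := fun z =>
    fZ z * ∏ i, (1 - stdNormalCDF (z i)) ^ 2 / (R * stdNormalPDF (z i)) with hFdef
  have hfZcont : Continuous fZ := by
    have he : fZ = fun z => (2 * π) ^ (-(D:ℝ)/2) * Sig.det ^ (-(1:ℝ)/2) *
        Real.exp (-(1/2) * (z ⬝ᵥ Sig⁻¹ *ᵥ z)) := funext hfZ
    rw [he]
    have hq : Continuous fun z : Fin D → ℝ => z ⬝ᵥ Sig⁻¹ *ᵥ z := by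
      simp only [dotProduct, Matrix.mulVec, dotProduct]; fun_prop
    fun_prop
  have hFcont : Continuous F := by
    refine hfZcont.mul (continuous_finset_prod _ fun i _ => ?_)
    refine Continuous.div ?_ ?_ (fun z => ?_)
    · exact ((continuous_const.sub (cdf_continuous.comp (continuous_apply i))).pow 2)
    · exact continuous_const.mul (pdf_continuous.comp (continuous_apply i))
    · exact (mul_pos hR (pdf_pos (z i))).ne'
  set h : (Fin D → ℝ) → ℝ := Function.extend T F (fun _ => 0) with hh
  have hrangeT : ∀ x ∈ Set.range T, ∀ i, R < x i := by
    rintro x ⟨z, rfl⟩ i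
    exact tmap_gt hR (z i)
  refine ⟨h, hTemb.measurable_extend hFcont.measurable measurable_const, ?_, ?_, ?_⟩
  · -- measure equality
    ext A hA
    rw [Measure.map_apply hTmeas hA, withDensity_apply _ (hTmeas hA), withDensity_apply _ hA]
    have hrange : MeasurableSet (Set.range T) := hTemb.measurableSet_range
    have step1 : ∫⁻ x in A, ENNReal.ofReal (h x) =
        ∫⁻ x in T '' (T ⁻¹' A), ENNReal.ofReal (h x) := by
      rw [Set.image_preimage_eq_range_inter]
      have hind : ∀ x, ENNReal.ofReal (h x)
          = (Set.range T).indicator (fun x => ENNReal.ofReal (h x)) x := by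
        intro x
        by_cases hx : x ∈ Set.range T
        · rw [Set.indicator_of_mem hx]
        · rw [Set.indicator_of_notMem hx, hh,
            Function.extend_apply' _ _ _ (fun ⟨a, ha⟩ => hx ⟨a, ha⟩)]
          simp
      calc ∫⁻ x in A, ENNReal.ofReal (h x)
          = ∫⁻ x in A, (Set.range T).indicator (fun x => ENNReal.ofReal (h x)) x :=
            lintegral_congr hind
        _ = ∫⁻ x in Set.range T ∩ A, ENNReal.ofReal (h x) := by
            rw [lintegral_indicator hrange, Measure.restrict_restrict hrange]
    rw [step1, lintegral_image_eq_lintegral_abs_det_fderiv_mul volume (hTmeas hA)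
      (fun x _ => (hL x).hasFDerivWithinAt) hTinj.injOn]
    refine lintegral_congr fun z => ?_
    have hhTz : h (T z) = F z := hTinj.extend_apply F _ z
    rw [hhTz, hdet z]
    have hprod_pos : 0 < ∏ i, d (z i) := Finset.prod_pos fun i _ => hd_pos _
    rw [abs_of_pos hprod_pos, ← ENNReal.ofReal_mul hprod_pos.le]
    congr 1
    have hfac : ∀ i : Fin D,
        d (z i) * ((1 - stdNormalCDF (z i)) ^ 2 / (R * stdNormalPDF (z i))) = 1 := by
      intro i
      have h1 : R * stdNormalPDF (z i) ≠ 0 := (mul_pos hR (pdf_pos (z i))).ne'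
      have h2 : (1 - stdNormalCDF (z i)) ≠ 0 := (one_sub_cdf_pos (z i)).ne'
      rw [hd]
      field_simp
      exact div_self (pdf_pos (z i)).ne'
    calc fZ z = fZ z * ∏ i : Fin D,
          d (z i) * ((1 - stdNormalCDF (z i)) ^ 2 / (R * stdNormalPDF (z i))) := by
          simp [hfac]
      _ = (∏ i, d (z i)) * F z := by
          rw [hFdef, Finset.prod_mul_distrib]; ring
  · -- vanishing off (R, ∞)^D
    rintro x ⟨i, hxi⟩
    rw [hh]
    refine Function.extend_apply' _ _ _ ?_
    rintro ⟨z, rfl⟩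
    exact absurd hxi (not_le.2 (hrangeT _ ⟨z, rfl⟩ i))
  · -- formula
    intro z
    exact hTinj.extend_apply F _ z
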